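/- Let 𝒞 be a Z2Z4-additive code generated as a group by a finite set G ⊆ Z2^α × Z4^β. Then Φ(𝒞) is a Z2-linear subspace of Z2^(α+2β) if and only if 2(g*h) ∈ 𝒞 for all g, h ∈ G. -/

import Mathlib

/-- The ambient group `Z2^α × Z4^β`, with componentwise ring structure
(so `u * v` is the componentwise product). -/
abbrev Amb (α β : ℕ) := (Fin α → ZMod 2) × (Fin β → ZMod 4)

/-- The binary space `Z2^α × (Z2²)^β ≅ Z2^(α+2β)`. -/
abbrev Bin (α β : ℕ) := (Fin α → ZMod 2) × (Fin β → ZMod 2 × ZMod 2)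

/-- The Gray map `φ : Z4 → Z2²` with `φ(0)=(0,0), φ(1)=(0,1), φ(2)=(1,1), φ(3)=(1,0)`. -/
def grayPair (y : ZMod 4) : ZMod 2 × ZMod 2 :=
  match y.val with
  | 0 => (0, 0)
  | 1 => (0, 1)
  | 2 => (1, 1)
  | _ => (1, 0)

/-- The extended Gray map `Φ : Z2^α × Z4^β → Z2^(α+2β)`. -/
def Phi {α β : ℕ} (u : Amb α β) : Bin α β :=
  (u.1, fun i => grayPair (u.2 i))

/-- The kernel `K(C) = {x | x + C = C}` of a binary code. -/
def kernelK {α β : ℕ} (C : Set (Bin α β)) : Set (Bin α β) :=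
  {x | (fun y => x + y) '' C = C}

/-- The rank of a binary code: the `Z2`-dimension of its linear span. -/
noncomputable def rankOf {α β : ℕ} (C : Set (Bin α β)) : ℕ :=
  Module.finrank (ZMod 2) (Submodule.span (ZMod 2) C)

/-- The dimension of the kernel of a binary code. -/
noncomputable def kerDim {α β : ℕ} (C : Set (Bin α β)) : ℕ :=
  Module.finrank (ZMod 2) (Submodule.span (ZMod 2) (kernelK C))

/-- A `Z2Z4`-additive code `C ⊆ Z2^α × Z4^β` is of type `(α,β;γ,δ;κ)`:
`|C| = 2^(γ+2δ)`, the number of elements `x` with `2x = 0` is `2^(γ+δ)`, and `κ` is the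
`Z2`-dimension of the projection onto the first `α` coordinates of `{x ∈ C | 2x = 0}`. -/
def IsTypeOf (α β γ δ κ : ℕ) (C : AddSubgroup (Amb α β)) : Prop :=
  Nat.card C = 2 ^ (γ + 2 * δ) ∧
  Nat.card {x : Amb α β | x ∈ C ∧ 2 • x = 0} = 2 ^ (γ + δ) ∧
  Module.finrank (ZMod 2)
    (Submodule.span (ZMod 2) (Prod.fst '' {x : Amb α β | x ∈ C ∧ 2 • x = 0})) = κ

lemma grayPair_add : ∀ a b : ZMod 4,
    grayPair a + grayPair b = grayPair (a + b + 2 * (a * b)) := by decide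

lemma grayPair_inj : Function.Injective grayPair := by decide

lemma Phi_add {α β : ℕ} (u v : Amb α β) :
    Phi u + Phi v = Phi (u + v + 2 * (u * v)) := by
  have h2 : ∀ a b : ZMod 2, a + b = a + b + 2 * (a * b) := by decide
  refine Prod.ext ?_ ?_
  · funext i
    show u.1 i + v.1 i = u.1 i + v.1 i + 2 * (u.1 i * v.1 i)
    exact h2 _ _
  · funext i
    show grayPair (u.2 i) + grayPair (v.2 i) = grayPair (u.2 i + v.2 i + 2 * (u.2 i * v.2 i))
    exact grayPair_add _ _

lemma Phi_inj {α β : ℕ} : Function.Injective (Phi (α := α) (β := β)) := by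
  intro u v h
  unfold Phi at h
  have h1 := congrArg Prod.fst h
  have h2 := congrArg Prod.snd h
  refine Prod.ext h1 ?_
  funext i
  exact grayPair_inj (congrFun h2 i)

lemma Phi_zero {α β : ℕ} : Phi (0 : Amb α β) = 0 := by
  unfold Phi
  refine Prod.ext rfl ?_
  funext i
  show grayPair 0 = 0
  decide

/-- If `𝒞` is generated as a group by a finite set `G`, then `Φ(𝒞)` is a
`Z2`-linear subspace iff `2(g*h) ∈ 𝒞` for all `g, h ∈ G`. -/
theorem gray_image_linear_iff_generators (α β : ℕ) (G : Finset (Amb α β)) :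
    (∃ W : Submodule (ZMod 2) (Bin α β),
        (W : Set (Bin α β)) =
          Phi '' (AddSubgroup.closure (G : Set (Amb α β)) : Set (Amb α β))) ↔
      ∀ g ∈ G, ∀ h ∈ G, 2 * (g * h) ∈ AddSubgroup.closure (G : Set (Amb α β)) := by
  set C := AddSubgroup.closure (G : Set (Amb α β)) with hC
  constructor
  · rintro ⟨W, hW⟩ g hg h hh
    have hgC : g ∈ C := AddSubgroup.subset_closure hg
    have hhC : h ∈ C := AddSubgroup.subset_closure hh
    have h1 : Phi g ∈ (W : Set (Bin α β)) := hW ▸ ⟨g, hgC, rfl⟩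
    have h2 : Phi h ∈ (W : Set (Bin α β)) := hW ▸ ⟨h, hhC, rfl⟩
    have h3 : Phi g + Phi h ∈ (W : Set (Bin α β)) := W.add_mem h1 h2
    rw [hW, Phi_add] at h3
    obtain ⟨w, hwC, hw⟩ := h3
    have : w = g + h + 2 * (g * h) := Phi_inj hw
    subst this
    have := C.sub_mem hwC (C.add_mem hgC hhC)
    simpa using this
  · intro hGen
    -- first extend to all of C
    have key : ∀ u ∈ C, ∀ v ∈ C, 2 * (u * v) ∈ C := by
      intro u hu v hv
      induction hu, hv using AddSubgroup.closure_induction₂ with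
      | mem x y hx hy => exact hGen x hx y hy
      | zero_left x hx => simpa using C.zero_mem
      | zero_right x hx => simpa using C.zero_mem
      | add_left x y z hx hy hz h1 h2 =>
          have : 2 * ((x + y) * z) = 2 * (x * z) + 2 * (y * z) := by ring
          rw [this]; exact C.add_mem h1 h2
      | add_right y z x hy hz hx h1 h2 =>
          have : 2 * (x * (y + z)) = 2 * (x * y) + 2 * (x * z) := by ring
          rw [this]; exact C.add_mem h1 h2
      | neg_left x y hx hy h1 =>
          have : 2 * (-x * y) = -(2 * (x * y)) := by ring
          rw [this]; exact C.neg_mem h1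
      | neg_right x y hx hy h1 =>
          have : 2 * (x * -y) = -(2 * (x * y)) := by ring
          rw [this]; exact C.neg_mem h1
    refine ⟨{ carrier := Phi '' (C : Set (Amb α β))
              add_mem' := ?_
              zero_mem' := ⟨0, C.zero_mem, Phi_zero⟩
              smul_mem' := ?_ }, rfl⟩
    · rintro a b ⟨u, hu, rfl⟩ ⟨v, hv, rfl⟩
      rw [Phi_add]
      exact ⟨_, C.add_mem (C.add_mem hu hv) (key u hu v hv), rfl⟩
    · intro c x hx
      have hc : c = 0 ∨ c = 1 := by revert c; decide
      rcases hc with rfl | rfl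
      · rw [zero_smul]; exact ⟨0, C.zero_mem, Phi_zero⟩
      · rw [one_smul]; exact hx
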